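/- Let C ≤ SL_3(R) be the group of positive diagonal matrices and let P_n be the matrix with rows (1, n, n), (0, 1, 0), (0, 0, 1). Then P_n C P_n^{-1} converges, as n → ∞, to the group N_2 = { matrices with rows (1, s, t), (0, 1, 0), (0, 0, 1) : s, t ∈ R }. -/

import Mathlib

open Filter Topology Matrix

/-- Convergence of a sequence of subsets (subgroups) of a topological space:
(a) every element of `L` is a limit of a sequence with `n`-th term in `H n`;
(b) every subsequential limit of such sequences lies in `L`. -/
def SubgroupConverges {M : Type*} [TopologicalSpace M]
    (H : ℕ → Set M) (L : Set M) : Prop :=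
  (∀ l ∈ L, ∃ h : ℕ → M, (∀ n, h n ∈ H n) ∧ Tendsto h atTop (𝓝 l)) ∧
  (∀ h : ℕ → M, (∀ n, h n ∈ H n) → ∀ φ : ℕ → ℕ, StrictMono φ → ∀ l : M,
    Tendsto (h ∘ φ) atTop (𝓝 l) → l ∈ L)

/-- The positive diagonal Cartan subgroup of SL₃(ℝ), as a set of matrices. -/
def CartanC : Set (Matrix (Fin 3) (Fin 3) ℝ) :=
  {M | ∃ a b : ℝ, 0 < a ∧ 0 < b ∧ M = Matrix.diagonal ![a, b, 1 / (a * b)]}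

noncomputable def P3 (n : ℕ) : Matrix (Fin 3) (Fin 3) ℝ :=
  !![1, (n : ℝ), (n : ℝ); 0, 1, 0; 0, 0, 1]

def groupN2 : Set (Matrix (Fin 3) (Fin 3) ℝ) :=
  {M | ∃ s t : ℝ, M = !![1, s, t; 0, 1, 0; 0, 0, 1]}

lemma P3_inv (n : ℕ) : (P3 n)⁻¹ = !![1, -(n : ℝ), -(n : ℝ); 0, 1, 0; 0, 0, 1] := by
  apply inv_eq_right_inv
  ext i j
  fin_cases i <;> fin_cases j <;>
    simp [P3, Matrix.mul_apply, Fin.sum_univ_three, Matrix.one_apply,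
      Matrix.vecHead, Matrix.vecTail]

lemma P3_conj_diag (n : ℕ) (a b c : ℝ) :
    P3 n * Matrix.diagonal ![a, b, c] * (P3 n)⁻¹ =
      !![a, (n:ℝ) * (b - a), (n:ℝ) * (c - a); 0, b, 0; 0, 0, c] := by
  rw [P3_inv]
  ext i j
  fin_cases i <;> fin_cases j <;>
    simp [P3, Matrix.mul_apply, Fin.sum_univ_three, Matrix.diagonal,
      Matrix.vecHead, Matrix.vecTail] <;> ring

lemma aux_exp (u : ℝ) :
    Tendsto (fun n : ℕ => (n : ℝ) * (Real.exp (u / n) - 1)) atTop (𝓝 u) := by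
  rcases eq_or_ne u 0 with rfl | hu
  · simpa using tendsto_const_nhds
  · have hslope : Tendsto (fun x : ℝ => (Real.exp x - 1) / x) (𝓝[≠] (0:ℝ)) (𝓝 1) := by
      have h := Real.hasDerivAt_exp 0
      rw [hasDerivAt_iff_tendsto_slope] at h
      simp only [Real.exp_zero] at h
      refine h.congr (fun x => ?_)
      simp [slope_def_field]
    have hcomp : Tendsto (fun n : ℕ => u / n) atTop (𝓝[≠] (0:ℝ)) := by
      refine tendsto_nhdsWithin_iff.2 ⟨tendsto_const_div_atTop_nhds_zero_nat u, ?_⟩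
      filter_upwards [eventually_gt_atTop 0] with n hn
      exact div_ne_zero hu (by positivity)
    have h2 : Tendsto (fun n : ℕ => u * ((Real.exp (u / n) - 1) / (u / n)))
        atTop (𝓝 u) := by
      simpa using (hslope.comp hcomp).const_mul u
    refine h2.congr' ?_
    filter_upwards [eventually_gt_atTop 0] with n hn
    have hn' : (n : ℝ) ≠ 0 := by positivity
    field_simp

lemma aux_exp_sub (x y : ℝ) :
    Tendsto (fun n : ℕ => (n : ℝ) * (Real.exp (x / n) - Real.exp (y / n)))
      atTop (𝓝 (x - y)) := by
  have := (aux_exp x).sub (aux_exp y)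
  refine this.congr (fun n => by ring)

lemma aux_exp_one (x : ℝ) :
    Tendsto (fun n : ℕ => Real.exp (x / n)) atTop (𝓝 1) := by
  simpa [Function.comp_def] using (Real.continuous_exp.tendsto 0).comp (tendsto_const_div_atTop_nhds_zero_nat x)

/-- `P_n C P_n⁻¹` converges to the group `N₂`. -/
theorem cartan_conj_converges_to_N2 :
    SubgroupConverges
      (fun n => (fun M => P3 n * M * (P3 n)⁻¹) '' CartanC) groupN2 := by
  constructor
  · -- part (a)
    rintro l ⟨s, t, rfl⟩
    set u : ℝ := -(s+t)/3 with hu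
    set v : ℝ := (2*s-t)/3 with hv
    set w : ℝ := (2*t-s)/3 with hw
    refine ⟨fun n => !![Real.exp (u/n), (n:ℝ)*(Real.exp (v/n) - Real.exp (u/n)),
        (n:ℝ)*(Real.exp (w/n) - Real.exp (u/n));
        0, Real.exp (v/n), 0; 0, 0, Real.exp (w/n)], fun n => ?_, ?_⟩
    · refine ⟨Matrix.diagonal ![Real.exp (u/n), Real.exp (v/n),
        1/(Real.exp (u/n) * Real.exp (v/n))],
        ⟨_, _, Real.exp_pos _, Real.exp_pos _, rfl⟩, ?_⟩
      beta_reduce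
      rw [P3_conj_diag]
      have hc : 1/(Real.exp (u/n) * Real.exp (v/n)) = Real.exp (w/n) := by
        rw [← Real.exp_add, one_div, ← Real.exp_neg]
        congr 1
        rw [← add_div, ← neg_div]
        congr 1
        rw [hu, hv, hw]; ring
      rw [hc]
    · refine tendsto_pi_nhds.2 ?_
      intro i
      rw [tendsto_pi_nhds]
      intro j
      have h01 : Tendsto (fun n : ℕ => (n:ℝ)*(Real.exp (v/n) - Real.exp (u/n)))
          atTop (𝓝 s) := by
        have := aux_exp_sub v u
        rwa [show v - u = s by rw [hu, hv]; ring] at this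
      have h02 : Tendsto (fun n : ℕ => (n:ℝ)*(Real.exp (w/n) - Real.exp (u/n)))
          atTop (𝓝 t) := by
        have := aux_exp_sub w u
        rwa [show w - u = t by rw [hu, hw]; ring] at this
      fin_cases i <;> fin_cases j <;>
        simp [Matrix.vecHead, Matrix.vecTail] <;>
        first
        | exact aux_exp_one _
        | exact h01
        | exact h02
        | exact tendsto_const_nhds
  · -- part (b)
    intro h hm φ hφ l hφl
    have H : ∀ n, ∃ a b : ℝ, 0 < a ∧ 0 < b ∧
        h n = !![a, (n:ℝ)*(b-a), (n:ℝ)*(1/(a*b)-a); 0, b, 0; 0, 0, 1/(a*b)] := by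
      intro n
      obtain ⟨M, ⟨a, b, ha, hb, rfl⟩, hMeq⟩ := hm n
      exact ⟨a, b, ha, hb, by rw [← hMeq]; beta_reduce; rw [P3_conj_diag]⟩
    choose a b ha hb hform using H
    have hent : ∀ i j, Tendsto (fun k => (h (φ k)) i j) atTop (𝓝 (l i j)) := by
      intro i j
      have h1 := tendsto_pi_nhds.1 hφl i
      exact tendsto_pi_nhds.1 h1 j
    have hA : Tendsto (fun k => a (φ k)) atTop (𝓝 (l 0 0)) :=
      (hent 0 0).congr (fun k => by rw [hform (φ k)]; simp)
    have hB : Tendsto (fun k => b (φ k)) atTop (𝓝 (l 1 1)) :=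
      (hent 1 1).congr (fun k => by rw [hform (φ k)]; simp)
    have hC : Tendsto (fun k => 1/(a (φ k) * b (φ k))) atTop (𝓝 (l 2 2)) :=
      (hent 2 2).congr (fun k => by rw [hform (φ k)]; simp [Matrix.vecHead, Matrix.vecTail])
    have hS : Tendsto (fun k => ((φ k : ℕ) : ℝ) * (b (φ k) - a (φ k))) atTop (𝓝 (l 0 1)) :=
      (hent 0 1).congr (fun k => by rw [hform (φ k)]; simp)
    have hT : Tendsto (fun k => ((φ k : ℕ) : ℝ) * (1/(a (φ k) * b (φ k)) - a (φ k)))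
        atTop (𝓝 (l 0 2)) :=
      (hent 0 2).congr (fun k => by rw [hform (φ k)]; simp)
    have hzero : ∀ i j : Fin 3, (!![(0:ℝ), 0, 0; 1, 0, 1; 1, 1, 0] i j = 1) →
        l i j = 0 := by
      intro i j hij
      refine tendsto_nhds_unique ((hent i j).congr (fun k => ?_)) tendsto_const_nhds
      rw [hform (φ k)]
      fin_cases i <;> fin_cases j <;> simp_all [Matrix.vecHead, Matrix.vecTail]
    have hφtop : Tendsto (fun k => ((φ k : ℕ) : ℝ)) atTop atTop :=
      tendsto_natCast_atTop_atTop.comp hφ.tendsto_atTop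
    have hinv : Tendsto (fun k => ((φ k : ℕ) : ℝ)⁻¹) atTop (𝓝 0) :=
      hφtop.inv_tendsto_atTop
    have hdiff : Tendsto (fun k => b (φ k) - a (φ k)) atTop (𝓝 0) := by
      have := hS.mul hinv
      rw [mul_zero] at this
      refine this.congr' ?_
      filter_upwards [eventually_ge_atTop 1] with k hk
      have : (1:ℕ) ≤ φ k := le_trans hk hφ.le_apply
      have hne : ((φ k : ℕ) : ℝ) ≠ 0 := by positivity
      field_simp
    have hdiff2 : Tendsto (fun k => 1/(a (φ k) * b (φ k)) - a (φ k)) atTop (𝓝 0) := by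
      have := hT.mul hinv
      rw [mul_zero] at this
      refine this.congr' ?_
      filter_upwards [eventually_ge_atTop 1] with k hk
      have : (1:ℕ) ≤ φ k := le_trans hk hφ.le_apply
      have hne : ((φ k : ℕ) : ℝ) ≠ 0 := by positivity
      field_simp
    have hBA : l 1 1 = l 0 0 := by
      refine tendsto_nhds_unique hB ?_
      have := hA.add hdiff
      rw [add_zero] at this
      exact this.congr (fun k => by ring)
    have hCA : l 2 2 = l 0 0 := by
      refine tendsto_nhds_unique hC ?_
      have := hA.add hdiff2
      rw [add_zero] at this
      exact this.congr (fun k => by ring)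
    have hprod : l 0 0 * (l 1 1 * l 2 2) = 1 := by
      refine tendsto_nhds_unique (hA.mul (hB.mul hC)) ?_
      refine tendsto_const_nhds.congr (fun k => ?_)
      have h1 : a (φ k) * b (φ k) ≠ 0 := ne_of_gt (mul_pos (ha _) (hb _))
      field_simp
      exact (div_self h1).symm
    have hnn : 0 ≤ l 0 0 := ge_of_tendsto' hA (fun k => (ha (φ k)).le)
    have hone : l 0 0 = 1 := by
      rw [hBA, hCA] at hprod
      nlinarith [sq_nonneg (l 0 0 - 1), sq_nonneg (l 0 0 + 1)]
    refine ⟨l 0 1, l 0 2, ?_⟩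
    ext i j
    fin_cases i <;> fin_cases j <;>
      simp [Matrix.vecHead, Matrix.vecTail] <;>
      first
      | exact hone
      | (rw [hBA]; exact hone)
      | (rw [hCA]; exact hone)
      | exact hzero _ _ (by rfl)
      | rfl
      | norm_num [Matrix.vecHead, Matrix.vecTail]
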